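/- Let Ḡ be a Kempf monoid with zero over a field k with unit group G, and let U ↪ X be an open immersion of G-schemes. Then the commutative square formed by U⁺ → U^G, U⁺ → X⁺, X⁺ → X^G, and U^G → X^G (with horizontal maps the limit maps i_∞ and vertical maps induced by the open immersion) is cartesian: U⁺ is the fiber product X⁺ ×_{X^G} U^G. -/

import Mathlib

/-!
Geometric core: monoid schemes, unit groups, Kempf monoids,
actions and Białynicki-Birula functors, all encoded via the functor of points
(families of maps on `T`-points, natural in `T`), which by the Yoneda lemma is
equivalent to the usual definitions via multiplication morphisms.
-/

open CategoryTheory AlgebraicGeometry Limits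

noncomputable section

namespace BB

variable (k : Type) [Field k]

/-- `Spec k`. -/
abbrev Speck : Scheme := Spec (CommRingCat.of k)

/-- The category of schemes over `k`. -/
abbrev Sch := Over (Speck k)

/-- The terminal object `Spec k` of `Sch k`. -/
def basePt : Sch k := Over.mk (𝟙 (Speck k))

/-- The structure map to the terminal object. -/
def toBasePt (T : Sch k) : T ⟶ basePt k := Over.homMk T.hom (by simp [basePt])

/-- The algebraic closure of `k`. -/
abbrev Kb := AlgebraicClosure k

/-- `Spec k̄ ⟶ Spec k`. -/
def bcMap : Speck (Kb k) ⟶ Speck k :=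
  Spec.map (CommRingCat.ofHom (algebraMap k (Kb k)))

/-- A `k̄`-scheme viewed as a `k`-scheme. -/
def bcObj (T : Sch (Kb k)) : Sch k := Over.mk (T.hom ≫ bcMap k)

/-- A `k̄`-morphism viewed as a `k`-morphism. -/
def bcHom {T T' : Sch (Kb k)} (f : T' ⟶ T) : bcObj k T' ⟶ bcObj k T :=
  Over.homMk f.left (by dsimp [bcObj]; rw [← Category.assoc, Over.w])

/-- Restriction of global sections along a morphism of `k̄`-schemes. -/
def res {T T' : Sch (Kb k)} (f : T' ⟶ T) (s : Γ(T.left, ⊤)) : Γ(T'.left, ⊤) :=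
  Scheme.Γ.map f.left.op s

/-- A *monoid scheme structure* on a scheme `M` over `k`, encoded via the functor
of points: an associative unital multiplication on `T`-points, natural in `T`.
By the Yoneda lemma this is the same as a monoid structure
`μ : M ×ₖ M ⟶ M`, `1 : Spec k ⟶ M` on `M`. -/
structure MonStr (M : Sch k) where
  mul : ∀ {T : Sch k}, (T ⟶ M) → (T ⟶ M) → (T ⟶ M)
  one : ∀ T : Sch k, T ⟶ M
  mul_comp : ∀ {T T' : Sch k} (f : T' ⟶ T) (a b : T ⟶ M),
    f ≫ mul a b = mul (f ≫ a) (f ≫ b)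
  one_comp : ∀ {T T' : Sch k} (f : T' ⟶ T), f ≫ one T = one T'
  mul_assoc : ∀ {T : Sch k} (a b c : T ⟶ M), mul (mul a b) c = mul a (mul b c)
  one_mul : ∀ {T : Sch k} (a : T ⟶ M), mul (one T) a = a
  mul_one : ∀ {T : Sch k} (a : T ⟶ M), mul a (one T) = a

/-- A (necessarily unique, central) *zero* for a monoid scheme: an absorbing
`k`-point, encoded as the corresponding natural family of `T`-points. -/
structure ZeroStr {M : Sch k} (m : MonStr k M) where
  zero : ∀ T : Sch k, T ⟶ M
  zero_comp : ∀ {T T' : Sch k} (f : T' ⟶ T), f ≫ zero T = zero T'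
  zero_mul : ∀ {T : Sch k} (a : T ⟶ M), m.mul (zero T) a = zero T
  mul_zero : ∀ {T : Sch k} (a : T ⟶ M), m.mul a (zero T) = zero T

/-- A group scheme structure (monoid structure with inverses on points). -/
structure GrpStr (G : Sch k) extends MonStr k G where
  inv : ∀ {T : Sch k}, (T ⟶ G) → (T ⟶ G)
  inv_comp : ∀ {T T' : Sch k} (f : T' ⟶ T) (a : T ⟶ G), f ≫ inv a = inv (f ≫ a)
  mul_inv : ∀ {T : Sch k} (a : T ⟶ G), mul a (inv a) = one T
  inv_mul : ∀ {T : Sch k} (a : T ⟶ G), mul (inv a) a = one T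

/-- `M` is an *algebraic monoid* over `k`: a geometrically integral affine
variety (affine, of finite type over `k`, integral after base change to `k̄`)
together with its monoid structure. -/
structure IsAlgMonoid {M : Sch k} (m : MonStr k M) : Prop where
  affine : IsAffine M.left
  locallyOfFiniteType : LocallyOfFiniteType M.hom
  quasiCompact : QuasiCompact M.hom
  geomIntegral : AlgebraicGeometry.IsIntegral (pullback M.hom (bcMap k))

/-- The *unit group* of a monoid scheme `M`: an open subgroup scheme
`ι : G ⟶ M` whose `T`-points are exactly the invertible `T`-points of `M`. -/
structure UnitGroup {M : Sch k} (m : MonStr k M) where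
  G : Sch k
  grp : GrpStr k G
  ι : G ⟶ M
  openImmersion : IsOpenImmersion ι.left
  ι_mul : ∀ {T : Sch k} (a b : T ⟶ G), grp.mul a b ≫ ι = m.mul (a ≫ ι) (b ≫ ι)
  ι_one : ∀ T : Sch k, grp.one T ≫ ι = m.one T
  mem_range_iff : ∀ {T : Sch k} (a : T ⟶ M),
    (∃ b : T ⟶ M, m.mul a b = m.one T ∧ m.mul b a = m.one T) ↔ ∃ g : T ⟶ G, g ≫ ι = a

/-- A *Kempf structure* on an algebraic monoid `M` with zero: a central
one-parameter subgroup `𝔾ₘ,k̄ → Z(G)` whose induced map to `M_k̄` extends to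
`𝔸¹_k̄ → M_k̄` sending `0` to `0_M`.  It is encoded via the functor of points:
for a `k̄`-scheme `T`, the `T`-points of `𝔸¹_k̄` are the global sections
`Γ(T, O_T)` (and the `T`-points of `𝔾ₘ,k̄` are the units among them), so the
datum is a natural family `κ` as below; multiplicativity and centrality are
required on units, `κ` sends `0` to `0_M` and `1` to `1_M`, and units land in
the unit group `G`. -/
structure Kempf {M : Sch k} (m : MonStr k M) (z : ZeroStr k m) (U : UnitGroup k m) where
  κ : ∀ (T : Sch (Kb k)), Γ(T.left, ⊤) → (bcObj k T ⟶ M)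
  κ_natural : ∀ {T T' : Sch (Kb k)} (f : T' ⟶ T) (s : Γ(T.left, ⊤)),
    κ T' (res k f s) = bcHom k f ≫ κ T s
  κ_one : ∀ T : Sch (Kb k), κ T 1 = m.one _
  κ_zero : ∀ T : Sch (Kb k), κ T 0 = z.zero _
  κ_mul : ∀ (T : Sch (Kb k)) (s t : Γ(T.left, ⊤)), IsUnit s → IsUnit t →
    κ T (s * t) = m.mul (κ T s) (κ T t)
  κ_unit : ∀ (T : Sch (Kb k)) (s : Γ(T.left, ⊤)), IsUnit s →
    ∃ g : bcObj k T ⟶ U.G, g ≫ U.ι = κ T s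
  κ_central : ∀ (T : Sch (Kb k)) (s : Γ(T.left, ⊤)), IsUnit s →
    ∀ g : bcObj k T ⟶ U.G, m.mul (κ T s) (g ≫ U.ι) = m.mul (g ≫ U.ι) (κ T s)

/-- An action of a monoid scheme on a scheme `X` over `k`, via points. -/
structure MonAction {M : Sch k} (m : MonStr k M) (X : Sch k) where
  smul : ∀ {T : Sch k}, (T ⟶ M) → (T ⟶ X) → (T ⟶ X)
  smul_comp : ∀ {T T' : Sch k} (f : T' ⟶ T) (g : T ⟶ M) (x : T ⟶ X),
    f ≫ smul g x = smul (f ≫ g) (f ≫ x)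
  one_smul : ∀ {T : Sch k} (x : T ⟶ X), smul (m.one T) x = x
  mul_smul : ∀ {T : Sch k} (g h : T ⟶ M) (x : T ⟶ X),
    smul (m.mul g h) x = smul g (smul h x)

variable {k}

section BBfunctor

variable {M : Sch k} {m : MonStr k M} (z : ZeroStr k m) (U : UnitGroup k m)
variable {X : Sch k} (act : MonAction k U.grp.toMonStr X)

/-- The left `G`-action on `M ×ₖ T` (by left multiplication on the first factor),
on points. -/
def gActP {T T' : Sch k} (g : T' ⟶ U.G) (p : T' ⟶ M ⨯ T) : T' ⟶ M ⨯ T :=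
  prod.lift (m.mul (g ≫ U.ι) (p ≫ prod.fst)) (p ≫ prod.snd)

/-- A `T`-family `φ : M ×ₖ T ⟶ X` is `G`-equivariant, where `G` acts by left
multiplication on `M` and trivially on `T`. -/
def IsEquivariant {T : Sch k} (φ : M ⨯ T ⟶ X) : Prop :=
  ∀ {T' : Sch k} (g : T' ⟶ U.G) (p : T' ⟶ M ⨯ T),
    gActP U g p ≫ φ = act.smul g (p ≫ φ)

/-- The value of the Białynicki-Birula functor `X⁺` at `T`:
`G`-equivariant families `φ : M ×ₖ T ⟶ X`. -/
def BBpt (T : Sch k) : Type _ := { φ : M ⨯ T ⟶ X // IsEquivariant U act φ }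

/-- Pullback of a Białynicki-Birula family along `f : T' ⟶ T`. -/
def bbPull {T T' : Sch k} (f : T' ⟶ T) (φ : M ⨯ T ⟶ X) : M ⨯ T' ⟶ X :=
  prod.map (𝟙 M) f ≫ φ

/-- The limit (value at `0 × T`) of a family `φ : M ×ₖ T ⟶ X`. -/
def limitOf {T : Sch k} (φ : M ⨯ T ⟶ X) : T ⟶ X :=
  prod.lift (z.zero T) (𝟙 T) ≫ φ

/-- The restriction of a family `φ : M ×ₖ T ⟶ X` along the unit `1 × T`. -/
def unitOf {T : Sch k} (φ : M ⨯ T ⟶ X) : T ⟶ X :=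
  prod.lift (m.one T) (𝟙 T) ≫ φ

/-- A point `x : T ⟶ X` is a fixed point for the `G`-action. -/
def IsFixedPt {T : Sch k} (x : T ⟶ X) : Prop :=
  ∀ {T' : Sch k} (f : T' ⟶ T) (g : T' ⟶ U.G), act.smul g (f ≫ x) = f ≫ x

/-- The value of the fixed-point functor `X^G` at `T`. -/
def FixPt (T : Sch k) : Type _ := { x : T ⟶ X // IsFixedPt U act x }

end BBfunctor

end BB
namespace BB

variable {k : Type} [Field k]

section Key

variable {M : Sch k} {m : MonStr k M} (z : ZeroStr k m) {Ug : UnitGroup k m}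
  {XU X : Sch k}
  {actU : MonAction k Ug.grp.toMonStr XU}
  {actX : MonAction k Ug.grp.toMonStr X}

lemma comp_limitOf {T T' : Sch k} (f : T' ⟶ T) (φ : M ⨯ T ⟶ X) :
    prod.lift (z.zero T') f ≫ φ = f ≫ limitOf z φ := by
  rw [limitOf, ← Category.assoc, prod.comp_lift, Category.comp_id, z.zero_comp]

lemma limit_fixed {T : Sch k} (ψ : M ⨯ T ⟶ X) (hψ : IsEquivariant Ug actX ψ) :
    IsFixedPt Ug actX (limitOf z ψ) := by
  intro T' f g
  have h1 : f ≫ limitOf z ψ = prod.lift (z.zero T') f ≫ ψ := (comp_limitOf z f ψ).symm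
  have h2 : gActP Ug g (prod.lift (z.zero T') f) = prod.lift (z.zero T') f := by
    rw [gActP, prod.lift_fst, prod.lift_snd, z.mul_zero]
  have := hψ g (prod.lift (z.zero T') f)
  rw [h2] at this
  rw [h1, ← this]

lemma key_range (κ : Kempf k m z Ug) (j : XU ⟶ X) (hj : IsOpenImmersion j.left)
    (hjequiv : ∀ {T : Sch k} (g : T ⟶ Ug.G) (x : T ⟶ XU),
      actU.smul g x ≫ j = actX.smul g (x ≫ j))
    {T : Sch k} (φ : M ⨯ T ⟶ X) (hφ : IsEquivariant Ug actX φ)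
    (u : T ⟶ XU) (hu : u ≫ j = limitOf z φ) :
    Set.range (φ.left.base) ⊆ Set.range (j.left.base) := by
  haveI := hj
  set Y : Scheme := (M ⨯ T : Sch k).left with hY
  intro a ha
  obtain ⟨x, rfl⟩ := ha
  letI K : Type := AlgebraicClosure (Y.residueField x)
  letI : Field K := inferInstance
  -- point of (M ⨯ T) with values in K
  letI rK : Spec (CommRingCat.of K) ⟶ Y :=
    Spec.map (CommRingCat.ofHom (algebraMap (Y.residueField x) K)) ≫ Y.fromSpecResidueField x
  have hrK : ∀ y, rK.base y = x := by
    intro y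
    exact (Scheme.Hom.comp_apply _ _ _).trans (Scheme.fromSpecResidueField_apply x _)
  letI sk : Spec (CommRingCat.of K) ⟶ Speck k := rK ≫ (M ⨯ T : Sch k).hom
  letI ringk : CommRingCat.of k ⟶ CommRingCat.of K := Spec.preimage sk
  letI : Algebra k K := RingHom.toAlgebra ringk.hom
  letI emb : Kb k →ₐ[k] K := IsAlgClosed.lift
  -- rings
  letI A : Type := Polynomial K
  letI L : Type := FractionRing A
  letI eh : CommRingCat.of (Kb k) ⟶ CommRingCat.of K := CommRingCat.ofHom emb.toRingHom
  letI cKh : CommRingCat.of K ⟶ CommRingCat.of A := CommRingCat.ofHom Polynomial.C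
  letI iAh : CommRingCat.of A ⟶ CommRingCat.of L := CommRingCat.ofHom (algebraMap A L)
  letI ev0h : CommRingCat.of A ⟶ CommRingCat.of K :=
    CommRingCat.ofHom (Polynomial.evalRingHom 0)
  have hev0 : cKh ≫ ev0h = 𝟙 (CommRingCat.of K) := by
    ext a
    show (Polynomial.evalRingHom 0) (Polynomial.C a) = a
    simp
  -- k̄-schemes
  letI TA : Sch (Kb k) := Over.mk (Spec.map (eh ≫ cKh))
  letI TL : Sch (Kb k) := Over.mk (Spec.map (eh ≫ cKh ≫ iAh))
  letI TK : Sch (Kb k) := Over.mk (Spec.map eh)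
  letI ηh : TL ⟶ TA := Over.homMk (Spec.map iAh)
    (by simp [TA, TL, Spec.map_comp])
  letI e0m : TK ⟶ TA := Over.homMk (Spec.map ev0h)
    (by
      simp only [TA, TK, Over.mk_hom, ← Spec.map_comp]
      rw [Category.assoc, hev0, Category.comp_id])
  -- k-schemes
  letI TKk : Sch k := Over.mk sk
  letI r : TKk ⟶ M ⨯ T := Over.homMk rK rfl
  have hringk : ringk = CommRingCat.ofHom (algebraMap k (Kb k)) ≫ eh := by
    ext a
    show ringk a = emb (algebraMap k (Kb k) a)
    rw [AlgHom.commutes]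
    rfl
  letI ρ : bcObj k TA ⟶ TKk := Over.homMk (Spec.map cKh)
    (by
      show Spec.map cKh ≫ sk = TA.hom ≫ bcMap k
      rw [← Spec.map_preimage sk]
      show Spec.map cKh ≫ Spec.map ringk = Spec.map (eh ≫ cKh) ≫ bcMap k
      rw [bcMap, ← Spec.map_comp, ← Spec.map_comp, hringk, Category.assoc])
  letI q : bcObj k TA ⟶ M ⨯ T := ρ ≫ r
  -- the coordinate section
  letI s : Γ(TA.left, ⊤) := (Scheme.ΓSpecIso (CommRingCat.of A)).inv Polynomial.X
  -- the curve
  letI pc : bcObj k TA ⟶ M ⨯ T :=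
    prod.lift (m.mul (κ.κ TA s) (q ≫ prod.fst)) (q ≫ prod.snd)
  letI curve := pc ≫ φ
  -- value at 0
  have hres0 : res k e0m s = 0 := by
    show Scheme.Γ.map (Spec.map ev0h).op ((Scheme.ΓSpecIso (CommRingCat.of A)).inv Polynomial.X)
      = 0
    rw [Scheme.Γ_map]
    show ((Scheme.ΓSpecIso (CommRingCat.of A)).inv ≫ (Spec.map ev0h).appTop) Polynomial.X = 0
    rw [← Scheme.ΓSpecIso_inv_naturality]
    show (Scheme.ΓSpecIso (CommRingCat.of K)).inv (ev0h Polynomial.X) = 0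
    have h2 : ev0h Polynomial.X = 0 := by
      show (Polynomial.evalRingHom (0 : K)) Polynomial.X = 0
      simp
    rw [h2, map_zero]
  have hv0 : bcHom k e0m ≫ curve = ((bcHom k e0m ≫ q ≫ prod.snd) ≫ u) ≫ j := by
    show bcHom k e0m ≫ (pc ≫ φ) = _
    rw [← Category.assoc]
    have h1 : bcHom k e0m ≫ pc =
        prod.lift (z.zero (bcObj k TK)) (bcHom k e0m ≫ q ≫ prod.snd) := by
      show bcHom k e0m ≫ prod.lift (m.mul (κ.κ TA s) (q ≫ prod.fst)) (q ≫ prod.snd) = _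
      rw [prod.comp_lift, m.mul_comp, ← κ.κ_natural, hres0, κ.κ_zero, z.zero_mul]
    rw [h1, comp_limitOf z _ φ, ← hu]
    simp only [Category.assoc]
  -- value at the generic point: a unit
  letI sL : Γ(TL.left, ⊤) := res k ηh s
  have hsL : IsUnit sL := by
    show IsUnit (Scheme.Γ.map (Spec.map iAh).op
      ((Scheme.ΓSpecIso (CommRingCat.of A)).inv Polynomial.X))
    rw [Scheme.Γ_map]
    show IsUnit (((Scheme.ΓSpecIso (CommRingCat.of A)).inv ≫ (Spec.map iAh).appTop)
      Polynomial.X)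
    rw [← Scheme.ΓSpecIso_inv_naturality]
    show IsUnit ((Scheme.ΓSpecIso (CommRingCat.of L)).inv (iAh Polynomial.X))
    have hX : IsUnit (iAh Polynomial.X) := by
      show IsUnit (algebraMap A L Polynomial.X)
      refine isUnit_iff_ne_zero.mpr ?_
      rw [map_ne_zero_iff _ (IsFractionRing.injective A L)]
      exact Polynomial.X_ne_zero
    exact hX.map ((Scheme.ΓSpecIso (CommRingCat.of L)).inv.hom)
  obtain ⟨g, hg⟩ := κ.κ_unit TL sL hsL
  have hg' : g ≫ Ug.ι = κ.κ TL (res k ηh s) := hg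
  have hηpc : bcHom k ηh ≫ pc = gActP Ug g (bcHom k ηh ≫ q) := by
    show bcHom k ηh ≫ prod.lift (m.mul (κ.κ TA s) (q ≫ prod.fst)) (q ≫ prod.snd) = _
    rw [prod.comp_lift, m.mul_comp, ← κ.κ_natural, gActP, Category.assoc, Category.assoc,
      ← hg']
    show _ = prod.lift (m.mul (g ≫ Ug.ι) ((bcHom k ηh ≫ ρ ≫ r) ≫ prod.fst))
      ((bcHom k ηh ≫ ρ ≫ r) ≫ prod.snd)
    simp only [Category.assoc]
  have h2 : bcHom k ηh ≫ curve = actX.smul g ((bcHom k ηh ≫ q) ≫ φ) := by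
    show bcHom k ηh ≫ (pc ≫ φ) = _
    rw [← Category.assoc, hηpc, hφ g (bcHom k ηh ≫ q)]
  -- topology
  have hW : ∀ yL : (bcObj k TL).left,
      (bcHom k ηh ≫ curve).left.base yL ∈ Set.range j.left.base := by
    intro yL
    have hopen : IsOpen (Set.range j.left.base) := IsOpenImmersion.isOpen_range j.left
    have hWopen : IsOpen (curve.left.base ⁻¹' Set.range j.left.base) :=
      hopen.preimage curve.left.continuous
    obtain ⟨y0⟩ : Nonempty (Spec (CommRingCat.of K)) := inferInstance
    have h0 : (Spec.map ev0h).base y0 ∈ curve.left.base ⁻¹' Set.range j.left.base := by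
      show curve.left.base ((Spec.map ev0h).base y0) ∈ Set.range j.left.base
      have he : curve.left.base ((Spec.map ev0h).base y0)
          = (bcHom k e0m ≫ curve).left.base y0 := by
        rfl
      rw [he, hv0]
      exact ⟨((bcHom k e0m ≫ q ≫ prod.snd) ≫ u).left.base y0, rfl⟩
    letI pL : PrimeSpectrum A := (Spec.map iAh).base yL
    letI p0 : PrimeSpectrum A := (Spec.map ev0h).base y0
    have hbot : pL.asIdeal = ⊥ := by
      show (PrimeSpectrum.comap (algebraMap A L) (show PrimeSpectrum L from yL)).asIdeal = ⊥
      rw [PrimeSpectrum.comap_asIdeal]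
      have hyl : (show PrimeSpectrum L from yL).asIdeal = ⊥ := Ideal.eq_bot_of_prime _
      rw [hyl]
      exact (RingHom.injective_iff_ker_eq_bot _).mp (IsFractionRing.injective A L)
    have hle : pL ≤ p0 := by
      rw [← PrimeSpectrum.asIdeal_le_asIdeal, hbot]
      exact bot_le
    have hspec : pL ⤳ p0 := (PrimeSpectrum.le_iff_specializes _ _).mp hle
    have hmem : (Spec.map iAh).base yL ∈ curve.left.base ⁻¹' Set.range j.left.base :=
      hspec.mem_open hWopen h0
    have he : (bcHom k ηh ≫ curve).left.base yL
        = curve.left.base ((Spec.map iAh).base yL) := by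
      rw [Over.comp_left, Scheme.Hom.comp_apply]; rfl
    rw [he]
    exact hmem
  -- factor through the open subscheme
  letI zleft : (bcObj k TL).left ⟶ XU.left :=
    IsOpenImmersion.lift j.left (bcHom k ηh ≫ curve).left (by
      rintro _ ⟨yL, rfl⟩; exact hW yL)
  have hzleft : zleft ≫ j.left = (bcHom k ηh ≫ curve).left :=
    IsOpenImmersion.lift_fac _ _ _
  letI zO : bcObj k TL ⟶ XU := Over.homMk zleft (by
    rw [← Over.w j, ← Category.assoc, hzleft, Over.w (bcHom k ηh ≫ curve)])
  have hzj : zO ≫ j = bcHom k ηh ≫ curve := by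
    apply Over.OverMorphism.ext
    exact hzleft
  -- translate back by g⁻¹
  have hfac : (bcHom k ηh ≫ q) ≫ φ = actU.smul (Ug.grp.inv g) zO ≫ j := by
    rw [hjequiv, hzj, h2, ← actX.mul_smul, Ug.grp.inv_mul, actX.one_smul]
  -- conclude
  obtain ⟨yL⟩ : Nonempty (bcObj k TL).left := by
    show Nonempty (Spec (CommRingCat.of L)); infer_instance
  have key := congrArg (fun (ff : bcObj k TL ⟶ X) => ff.left.base yL) hfac
  simp only [Over.comp_left, Scheme.Hom.comp_apply] at key
  have hq : q.left.base ((bcHom k ηh).left.base yL) = x := by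
    have h1 : (bcHom k ηh).left = Spec.map iAh := rfl
    have h2' : q.left = Spec.map cKh ≫ rK := by
      show (ρ ≫ r).left = _
      rw [Over.comp_left]; rfl
    rw [h2']
    exact hrK ((Spec.map cKh).base ((bcHom k ηh).left.base yL))
  rw [hq] at key
  exact ⟨_, key.symm⟩

end Key

end BB


open BB in
/-- Let `Ḡ` (here `M`) be a Kempf monoid with zero over `k`
with unit group `G`, and let `j : U ↪ X` be an open immersion of `G`-schemes.
Then the square

  `U⁺ → U^G`, `U⁺ → X⁺`, `X⁺ → X^G`, `U^G → X^G`

(with horizontal maps the limit maps `i_∞`) is cartesian: stated on the functor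
of points, `U⁺(T)` is in natural bijection with the fiber product
`X⁺(T) ×_{X^G(T)} U^G(T)`. -/
theorem statement_10
    (k : Type) [Field k]
    {M : Sch k} (m : MonStr k M) (z : ZeroStr k m) (Ug : UnitGroup k m)
    (hM : IsAlgMonoid k m) (κ : Kempf k m z Ug)
    -- an open immersion `j : XU ↪ X` of `G`-schemes:
    {XU X : Sch k} (actU : MonAction k Ug.grp.toMonStr XU)
    (actX : MonAction k Ug.grp.toMonStr X)
    (j : XU ⟶ X) (hj : IsOpenImmersion j.left)
    (hjequiv : ∀ {T : Sch k} (g : T ⟶ Ug.G) (x : T ⟶ XU),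
      actU.smul g x ≫ j = actX.smul g (x ≫ j)) :
    -- the square commutes: composing with `j` sends `U⁺` into `X⁺` and the
    -- limits match …
    (∀ {T : Sch k} (ψ : M ⨯ T ⟶ XU), IsEquivariant Ug actU ψ →
      IsEquivariant Ug actX (ψ ≫ j) ∧
      IsFixedPt Ug actU (limitOf z ψ) ∧
      limitOf z (ψ ≫ j) = limitOf z ψ ≫ j) ∧
    -- … and it is cartesian: a point of `X⁺ ×_{X^G} U^G` comes from a unique
    -- point of `U⁺`:
    (∀ {T : Sch k} (φ : M ⨯ T ⟶ X), IsEquivariant Ug actX φ →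
      ∀ u : T ⟶ XU, IsFixedPt Ug actU u → u ≫ j = limitOf z φ →
      ∃! ψ : M ⨯ T ⟶ XU,
        IsEquivariant Ug actU ψ ∧ ψ ≫ j = φ ∧ limitOf z ψ = u) := by
  haveI := hj
  have hcancel : ∀ {S : Sch k} (a b : S ⟶ XU), a ≫ j = b ≫ j → a = b := by
    intro S a b h
    apply Over.OverMorphism.ext
    have h' := congrArg CommaMorphism.left h
    simp only [Over.comp_left] at h'
    exact (cancel_mono j.left).mp h'
  constructor
  · intro T ψ hψ
    refine ⟨?_, ?_, ?_⟩
    · intro T' g p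
      rw [← Category.assoc, hψ g p, hjequiv, Category.assoc]
    · exact limit_fixed z ψ hψ
    · rw [limitOf, limitOf, Category.assoc]
  · intro T φ hφ u hufix huj
    have hrange : Set.range φ.left.base ⊆ Set.range j.left.base :=
      key_range z κ j hj hjequiv φ hφ u huj
    letI ψl := IsOpenImmersion.lift j.left φ.left hrange
    have hψl : ψl ≫ j.left = φ.left := IsOpenImmersion.lift_fac _ _ _
    letI ψ : M ⨯ T ⟶ XU := Over.homMk ψl
      (by rw [← Over.w j, ← Category.assoc, hψl, Over.w])
    have hψj : ψ ≫ j = φ := by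
      apply Over.OverMorphism.ext
      exact hψl
    have hψ : IsEquivariant Ug actU ψ := by
      intro T' g p
      apply hcancel
      rw [Category.assoc, hψj, hφ g p, hjequiv, Category.assoc, hψj]
    have hlim : limitOf z ψ = u := by
      apply hcancel
      rw [huj, limitOf, limitOf, Category.assoc, hψj]
    refine ⟨ψ, ⟨hψ, hψj, hlim⟩, ?_⟩
    rintro ψ' ⟨_, hψ'j, _⟩
    exact hcancel _ _ (hψ'j.trans hψj.symm)
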